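/- arXiv:0903.5074 — 5 statements merged into one kernel-verified Lean document; each statement's English description precedes it below -/
import Mathlib

section
/- Let m be a positive integer and B ≥ 0. For t = 1, 2, …, let x_t ∈ ℝ^m be vectors whose supports N_t := {i : x_{t,i} ≠ 0} are nondecreasing, i.e. N_t ⊆ N_{t+1} for all t. Define sets T_t ⊆ {1,…,m} recursively by T_0 = ∅ and T_t = T_{t−1} ∪ Δ̂_t, where at each t one is given a vector x̂_t ∈ ℝ^m with x̂_{t,i} = 0 for all i ∉ T_{t−1}, a vector β̂_t ∈ ℝ^m satisfying ‖x_t − x̂_t − β̂_t‖₂² ≤ B, and Δ̂_t := {i ∉ T_{t−1} : β̂_{t,i}² > B}. Then for every t ≥ 1: Δ̂_t ⊆ N_t, T_t ⊆ N_t, and T_t ∪ (N_{t+1} \ T_t) = N_{t+1}. -/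
/-- **No false additions** (deterministic core of Lemma 2).
Supports `N t = {i | x t i ≠ 0}` are nondecreasing; `T 0 = ∅` and
`T (t+1) = T t ∪ Δ̂ (t+1)` where `Δ̂ (t+1) = {i ∉ T t | (β̂ (t+1) i)² > B}`,
the estimate `x̂ (t+1)` vanishes off `T t`, and the error bound
`‖x (t+1) − x̂ (t+1) − β̂ (t+1)‖₂² ≤ B` holds.  Then for every time `t+1 ≥ 1`:
`Δ̂ (t+1) ⊆ N (t+1)`, `T (t+1) ⊆ N (t+1)` and
`T (t+1) ∪ (N (t+2) \ T (t+1)) = N (t+2)`. -/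
theorem no_false_additions
    (m : ℕ) (hm : 0 < m) (B : ℝ) (hB : 0 ≤ B)
    (x xhat βhat : ℕ → Fin m → ℝ)
    (T : ℕ → Set (Fin m))
    (hN : ∀ t : ℕ, {i : Fin m | x t i ≠ 0} ⊆ {i : Fin m | x (t + 1) i ≠ 0})
    (hT0 : T 0 = ∅)
    (hxhat : ∀ t : ℕ, ∀ i : Fin m, i ∉ T t → xhat (t + 1) i = 0)
    (herr : ∀ t : ℕ, ∑ i, (x (t + 1) i - xhat (t + 1) i - βhat (t + 1) i) ^ 2 ≤ B)
    (hTrec : ∀ t : ℕ,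
      T (t + 1) = T t ∪ {i : Fin m | i ∉ T t ∧ B < (βhat (t + 1) i) ^ 2}) :
    ∀ t : ℕ,
      {i : Fin m | i ∉ T t ∧ B < (βhat (t + 1) i) ^ 2} ⊆ {i : Fin m | x (t + 1) i ≠ 0} ∧
      T (t + 1) ⊆ {i : Fin m | x (t + 1) i ≠ 0} ∧
      T (t + 1) ∪ ({i : Fin m | x (t + 2) i ≠ 0} \ T (t + 1)) =
        {i : Fin m | x (t + 2) i ≠ 0} := by
  -- Δ̂ ⊆ N at every time
  have hΔ : ∀ t : ℕ,
      {i : Fin m | i ∉ T t ∧ B < (βhat (t + 1) i) ^ 2} ⊆ {i : Fin m | x (t + 1) i ≠ 0} := by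
    intro t i hi
    rcases hi with ⟨hiT, hiB⟩
    simp only [Set.mem_setOf_eq]
    intro hx0
    have hx : xhat (t + 1) i = 0 := hxhat t i hiT
    have hsingle : (x (t + 1) i - xhat (t + 1) i - βhat (t + 1) i) ^ 2 ≤
        ∑ j, (x (t + 1) j - xhat (t + 1) j - βhat (t + 1) j) ^ 2 := by
      exact Finset.single_le_sum (f := fun j => (x (t + 1) j - xhat (t + 1) j - βhat (t + 1) j) ^ 2)
        (fun j _ => sq_nonneg _) (Finset.mem_univ i)
    rw [hx0, hx] at hsingle
    have : (βhat (t + 1) i) ^ 2 ≤ B := by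
      have := hsingle.trans (herr t)
      simpa using this
    linarith
  -- T (t+1) ⊆ N (t+1) by induction
  have hTN : ∀ t : ℕ, T (t + 1) ⊆ {i : Fin m | x (t + 1) i ≠ 0} := by
    intro t
    induction t with
    | zero =>
        rw [hTrec 0]
        apply Set.union_subset
        · rw [hT0]; exact Set.empty_subset _
        · exact hΔ 0
    | succ n ih =>
        rw [hTrec (n + 1)]
        apply Set.union_subset
        · exact ih.trans (hN (n + 1))
        · exact hΔ (n + 1)
  intro t
  refine ⟨hΔ t, hTN t, ?_⟩
  rw [Set.union_diff_cancel ((hTN t).trans (hN (t + 1)))]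
end

section
/- Let m be a positive integer and B ≥ 0. Let x ∈ ℝ^m have support N := {i : x_i ≠ 0}, let T ⊆ {1,…,m} with T ⊆ N, let x̂ ∈ ℝ^m satisfy x̂_i = 0 for all i ∉ T, and let β̂ ∈ ℝ^m satisfy ‖x − x̂ − β̂‖₂² ≤ B. Define Δ := N \ T and Δ̂ := {i ∉ T : β̂_i² > B}. If x_i² > 4B for every i ∈ Δ, then Δ̂ = Δ, and consequently T ∪ Δ̂ = N. -/
/-- **Exact support recovery** (Lemma 3): with support `N = {i | x i ≠ 0}`,
detected set `T ⊆ N`, estimate `x̂` vanishing off `T`, error bound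
`‖x − x̂ − β̂‖₂² ≤ B`, undetected set `Δ = N \ T` and
`Δ̂ = {i ∉ T | β̂ i² > B}`:  if `x i² > 4B` for every `i ∈ Δ`, then `Δ̂ = Δ`
and `T ∪ Δ̂ = N`. -/
theorem exact_support_recovery
    (m : ℕ) (hm : 0 < m) (B : ℝ) (hB : 0 ≤ B)
    (x xhat βhat : Fin m → ℝ) (T : Set (Fin m))
    (hTN : T ⊆ {i : Fin m | x i ≠ 0})
    (hxhat : ∀ i : Fin m, i ∉ T → xhat i = 0)
    (herr : ∑ i, (x i - xhat i - βhat i) ^ 2 ≤ B)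
    (hbig : ∀ i ∈ {i : Fin m | x i ≠ 0} \ T, 4 * B < (x i) ^ 2) :
    {i : Fin m | i ∉ T ∧ B < (βhat i) ^ 2} = {i : Fin m | x i ≠ 0} \ T ∧
    T ∪ {i : Fin m | i ∉ T ∧ B < (βhat i) ^ 2} = {i : Fin m | x i ≠ 0} := by
  have hterm : ∀ i : Fin m, i ∉ T → (x i - βhat i) ^ 2 ≤ B := by
    intro i hi
    have h1 : (x i - xhat i - βhat i) ^ 2 ≤ ∑ j, (x j - xhat j - βhat j) ^ 2 :=
      Finset.single_le_sum (f := fun j => (x j - xhat j - βhat j) ^ 2) (fun j _ => sq_nonneg _) (Finset.mem_univ i)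
    rw [hxhat i hi] at h1
    simpa using h1.trans herr
  have hmain : {i : Fin m | i ∉ T ∧ B < (βhat i) ^ 2} = {i : Fin m | x i ≠ 0} \ T := by
    ext i
    simp only [Set.mem_setOf_eq, Set.mem_diff]
    constructor
    · rintro ⟨hi, hb⟩
      refine ⟨fun hx0 => ?_, hi⟩
      have := hterm i hi
      rw [hx0] at this
      nlinarith
    · rintro ⟨hx0, hi⟩
      refine ⟨hi, ?_⟩
      have h1 := hterm i hi
      have h2 := hbig i ⟨hx0, hi⟩
      nlinarith [sq_nonneg (x i * βhat i), sq_nonneg ((x i)^2 - (βhat i)^2 - B),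
        sq_nonneg (x i - βhat i), sq_nonneg (x i + βhat i), sq_nonneg (βhat i)]
  refine ⟨hmain, ?_⟩
  rw [hmain]
  ext i
  by_cases hi : i ∈ T
  · simp [hi, hTN hi]
  · simp [hi]
end

section
/- Let m be a positive integer, B > 0, σ > 0. Let N_* ⊆ {1,…,m} be a finite set and for each i ∈ N_* let t_i ≤ t_a be an integer (addition time). On a probability space, for each i ∈ N_* let (ν_{s,i})_{s≥1} be jointly independent Gaussian random variables with mean 0 and variance σ², and define the process x_{t,i} := Σ_{s=t_i+1}^{t} ν_{s,i} for t > t_i and x_{t,i} := 0 for t ≤ t_i; set x_{t,i} := 0 for all t when i ∉ N_*. Define random sets T_t ⊆ {1,…,m} by T_0 = ∅ and T_t = T_{t−1} ∪ Δ̂_t where, almost surely, at each t one is given a random vector x̂_t with x̂_{t,i} = 0 for i ∉ T_{t−1}, a random vector β̂_t with ‖x_t − x̂_t − β̂_t‖₂² ≤ B, and Δ̂_t := {i ∉ T_{t−1} : β̂_{t,i}² > B}. Then lim_{t→∞} P(T_{t+τ} = N_* for all τ ≥ 0) = 1. -/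
open ProbabilityTheory MeasureTheory Filter
open scoped ENNReal NNReal

/-- **Lemma 3 (finite detection delay).**
Each coefficient `i` in the final support `Nstar` is added at time `ti i ≤ ta`
and thereafter evolves as a zero-mean Gaussian random walk
`x (t) i = ∑_{s = ti i + 1}^{t} ν s i` with per-step variance `σ²`, the steps
being jointly independent across time and coordinates; coefficients outside
`Nstar` are identically zero.  The estimated supports satisfy `T 0 = ∅` and,
almost surely at each time `t+1`, `T (t+1) = T t ∪ Δ̂ (t+1)` where
`Δ̂ (t+1) = {i ∉ T t | (β̂ (t+1) i)² > B}`, the estimate `x̂ (t+1)` vanishes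
off `T t`, and `‖x (t+1) − x̂ (t+1) − β̂ (t+1)‖₂² ≤ B`.
Then `P(T (t+τ) = Nstar for all τ ≥ 0) → 1` as `t → ∞`. -/
theorem kfcs_finite_detection_delay
    (m : ℕ) (B σ : ℝ) (hB : 0 < B) (hσ : 0 < σ)
    (Nstar : Set (Fin m)) (ta : ℕ) (ti : Fin m → ℕ)
    (hti : ∀ i ∈ Nstar, ti i ≤ ta)
    {Ω : Type*} [MeasurableSpace Ω] (P : Measure Ω) [IsProbabilityMeasure P]
    (ν : ℕ → Fin m → Ω → ℝ)
    (hmeas : ∀ s : ℕ, 1 ≤ s → ∀ i ∈ Nstar, Measurable (ν s i))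
    (hgauss : ∀ s : ℕ, 1 ≤ s → ∀ i ∈ Nstar,
      P.map (ν s i) = gaussianReal 0 (σ ^ 2).toNNReal)
    (hindep : iIndepFun
      (fun p : ℕ × ↥Nstar => ν (p.1 + 1) p.2) P)
    (x : ℕ → Ω → Fin m → ℝ)
    (hx : ∀ t : ℕ, ∀ ω : Ω, ∀ i ∈ Nstar,
      x t ω i = ∑ s ∈ Finset.Ioc (ti i) t, ν s i ω)
    (hx0 : ∀ t : ℕ, ∀ ω : Ω, ∀ i : Fin m, i ∉ Nstar → x t ω i = 0)
    (T : ℕ → Ω → Set (Fin m))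
    (xhat βhat : ℕ → Ω → Fin m → ℝ)
    (hT0 : ∀ ω : Ω, T 0 ω = ∅)
    (halg : ∀ t : ℕ, ∀ᵐ ω ∂P,
      (∀ i : Fin m, i ∉ T t ω → xhat (t + 1) ω i = 0) ∧
      (∑ i, (x (t + 1) ω i - xhat (t + 1) ω i - βhat (t + 1) ω i) ^ 2 ≤ B) ∧
      T (t + 1) ω = T t ω ∪ {i : Fin m | i ∉ T t ω ∧ B < (βhat (t + 1) ω i) ^ 2}) :
    Tendsto (fun t : ℕ => P {ω : Ω | ∀ τ : ℕ, T (t + τ) ω = Nstar})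
      atTop (nhds 1) := by
  classical
  -- the "small step" set
  have hCmeas : MeasurableSet {y : ℝ | y ^ 2 ≤ 16 * B} := by
    have : {y : ℝ | y ^ 2 ≤ 16 * B} = (fun y : ℝ => y ^ 2) ⁻¹' Set.Iic (16 * B) := rfl
    rw [this]
    exact (measurable_id.pow_const 2) measurableSet_Iic
  have hvne : (σ ^ 2).toNNReal ≠ 0 := by
    simp only [ne_eq, Real.toNNReal_eq_zero, not_le]
    positivity
  set p : ℝ≥0∞ := gaussianReal 0 (σ ^ 2).toNNReal {y : ℝ | y ^ 2 ≤ 16 * B} with hpdef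
  -- p < 1
  have hplt : p < 1 := by
    have hsub : {y : ℝ | y ^ 2 ≤ 16 * B} ⊆ (Set.Ioi (Real.sqrt (16 * B)))ᶜ := by
      intro y hy hy2
      have h1 : Real.sqrt (16 * B) < y := hy2
      have h0 : 0 < y := lt_of_le_of_lt (Real.sqrt_nonneg _) h1
      exact absurd hy (not_le.mpr ((Real.sqrt_lt' h0).mp h1))
    have hpos : 0 < gaussianReal 0 (σ ^ 2).toNNReal (Set.Ioi (Real.sqrt (16 * B))) := by
      rw [gaussianReal_apply 0 hvne]
      rw [setLIntegral_pos_iff (measurable_gaussianPDF 0 _)]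
      have hsupp : Function.support (gaussianPDF 0 (σ ^ 2).toNNReal) = Set.univ := by
        ext y
        simp [Function.support, (gaussianPDF_pos 0 hvne y).ne']
      rw [hsupp, Set.univ_inter, Real.volume_Ioi]
      simp
    calc p ≤ gaussianReal 0 (σ ^ 2).toNNReal (Set.Ioi (Real.sqrt (16 * B)))ᶜ :=
          measure_mono hsub
      _ = 1 - gaussianReal 0 (σ ^ 2).toNNReal (Set.Ioi (Real.sqrt (16 * B))) :=
          prob_compl_eq_one_sub measurableSet_Ioi
      _ < 1 := ENNReal.sub_lt_self ENNReal.one_ne_top one_ne_zero hpos.ne'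
  -- measurability of the walk
  have hxmeas : ∀ t : ℕ, ∀ i ∈ Nstar, Measurable fun ω => x t ω i := by
    intro t i hi
    have hfun : (fun ω => x t ω i) = fun ω => ∑ s ∈ Finset.Ioc (ti i) t, ν s i ω := by
      funext ω; exact hx t ω i hi
    rw [hfun]
    refine Finset.measurable_sum _ fun s hs => ?_
    have := (Finset.mem_Ioc.mp hs).1
    exact hmeas s (by omega) i hi
  -- key per-coordinate bound
  have hkey : ∀ t : ℕ, ∀ i : Fin m, ∀ hi : i ∈ Nstar,
      P {ω | ∀ s ≤ t, (x s ω i) ^ 2 ≤ 4 * B} ≤ p ^ (t - ti i) := by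
    intro t i hi
    have hstep : {ω | ∀ s ≤ t, (x s ω i) ^ 2 ≤ 4 * B}
        ⊆ ⋂ s ∈ Finset.Ioc (ti i) t, ν s i ⁻¹' {y : ℝ | y ^ 2 ≤ 16 * B} := by
      intro ω hω
      simp only [Set.mem_iInter]
      intro s hs
      obtain ⟨hs1, hs2⟩ := Finset.mem_Ioc.mp hs
      obtain ⟨k, rfl⟩ : ∃ k, s = k + 1 := ⟨s - 1, by omega⟩
      have hxk : x k ω i = ∑ u ∈ Finset.Ioc (ti i) k, ν u i ω := hx k ω i hi
      have hxk1 : x (k + 1) ω i = ∑ u ∈ Finset.Ioc (ti i) (k + 1), ν u i ω :=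
        hx (k + 1) ω i hi
      have hsum : x (k + 1) ω i = x k ω i + ν (k + 1) i ω := by
        rw [hxk, hxk1, Finset.sum_Ioc_succ_top (by omega)]
      have h1 : (x (k + 1) ω i) ^ 2 ≤ 4 * B := hω (k + 1) hs2
      have h2 : (x k ω i) ^ 2 ≤ 4 * B := hω k (by omega)
      show (ν (k + 1) i ω) ^ 2 ≤ 16 * B
      have hν : ν (k + 1) i ω = x (k + 1) ω i - x k ω i := by linarith [hsum]
      rw [hν]
      nlinarith [sq_nonneg (x (k + 1) ω i + x k ω i), h1, h2]
    refine (measure_mono hstep).trans ?_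
    set S : Finset (ℕ × ↥Nstar) :=
      (Finset.Ioc (ti i) t).image (fun s => (s - 1, (⟨i, hi⟩ : ↥Nstar))) with hS
    have hprod := hindep.measure_inter_preimage_eq_mul
      (sets := fun _ => {y : ℝ | y ^ 2 ≤ 16 * B}) S (fun _ _ => hCmeas)
    have hinter : (⋂ s ∈ Finset.Ioc (ti i) t, ν s i ⁻¹' {y : ℝ | y ^ 2 ≤ 16 * B})
        = ⋂ q ∈ S, (fun q : ℕ × ↥Nstar => ν (q.1 + 1) q.2) q ⁻¹'
            {y : ℝ | y ^ 2 ≤ 16 * B} := by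
      ext ω
      simp only [Set.mem_iInter, Set.mem_preimage, hS, Finset.mem_image]
      constructor
      · rintro h q ⟨s, hs, rfl⟩
        have hs1 := (Finset.mem_Ioc.mp hs).1
        have hss : s - 1 + 1 = s := by omega
        simpa [hss] using h s hs
      · intro h s hs
        have hs1 := (Finset.mem_Ioc.mp hs).1
        have := h (s - 1, ⟨i, hi⟩) ⟨s, hs, rfl⟩
        simpa [Nat.sub_add_cancel (by omega : 1 ≤ s)] using this
    rw [hinter, hprod, hS]
    rw [Finset.prod_image (by
      intro a ha b hb hab
      have ha1 := (Finset.mem_Ioc.mp ha).1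
      have hb1 := (Finset.mem_Ioc.mp hb).1
      simp only [Prod.mk.injEq] at hab
      omega)]
    have hfac : ∀ s ∈ Finset.Ioc (ti i) t,
        P ((fun q : ℕ × ↥Nstar => ν (q.1 + 1) q.2) (s - 1, (⟨i, hi⟩ : ↥Nstar)) ⁻¹'
            {y : ℝ | y ^ 2 ≤ 16 * B}) = p := by
      intro s hs
      have hs1 : 1 ≤ s := by have := (Finset.mem_Ioc.mp hs).1; omega
      have hss : s - 1 + 1 = s := by omega
      simp only [hss]
      rw [← Measure.map_apply (hmeas s hs1 i hi) hCmeas, hgauss s hs1 i hi]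
    rw [Finset.prod_congr rfl hfac, Finset.prod_const, Nat.card_Ioc]
  -- the a.s. good event
  set Good : Set Ω := {ω | ∀ t : ℕ,
      (∀ i : Fin m, i ∉ T t ω → xhat (t + 1) ω i = 0) ∧
      (∑ i, (x (t + 1) ω i - xhat (t + 1) ω i - βhat (t + 1) ω i) ^ 2 ≤ B) ∧
      T (t + 1) ω = T t ω ∪ {i : Fin m | i ∉ T t ω ∧ B < (βhat (t + 1) ω i) ^ 2}}
    with hGooddef
  have hGoodae : P Goodᶜ = 0 := by
    have h := ae_iff.mp (ae_all_iff.mpr halg)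
    simpa [hGooddef, Set.compl_setOf] using h
  -- deterministic consequences on Good
  have hTsub : ∀ ω ∈ Good, ∀ t, T t ω ⊆ Nstar := by
    intro ω hω t
    induction t with
    | zero => rw [hT0 ω]; exact Set.empty_subset _
    | succ t ih =>
      rw [(hω t).2.2]
      rintro i (hiT | ⟨hiT, hiB⟩)
      · exact ih hiT
      · by_contra hiN
        have hx0' : x (t + 1) ω i = 0 := hx0 (t + 1) ω i hiN
        have hxhat : xhat (t + 1) ω i = 0 := (hω t).1 i hiT
        have hle : (x (t + 1) ω i - xhat (t + 1) ω i - βhat (t + 1) ω i) ^ 2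
            ≤ ∑ j, (x (t + 1) ω j - xhat (t + 1) ω j - βhat (t + 1) ω j) ^ 2 :=
          Finset.single_le_sum
            (f := fun j => (x (t + 1) ω j - xhat (t + 1) ω j - βhat (t + 1) ω j) ^ 2)
            (fun j _ => sq_nonneg _) (Finset.mem_univ i)
        rw [hx0', hxhat] at hle
        have : (βhat (t + 1) ω i) ^ 2 ≤ B := by
          have := hle.trans (hω t).2.1
          nlinarith [this]
        linarith
  have hTmono : ∀ ω ∈ Good, ∀ t τ, T t ω ⊆ T (t + τ) ω := by
    intro ω hω t τ
    induction τ with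
    | zero => exact subset_rfl
    | succ τ ih =>
      show T t ω ⊆ T (t + τ + 1) ω
      refine ih.trans ?_
      rw [(hω (t + τ)).2.2]
      exact Set.subset_union_left
  have hdet : ∀ ω ∈ Good, ∀ s : ℕ, ∀ i ∈ Nstar,
      4 * B < (x s ω i) ^ 2 → i ∈ T s ω := by
    intro ω hω s i hiN hbig
    cases s with
    | zero =>
      exfalso
      have hx00 : x 0 ω i = 0 := by
        rw [hx 0 ω i hiN]
        simp
      rw [hx00] at hbig
      nlinarith
    | succ t =>
      by_cases hiT : i ∈ T t ω
      · rw [(hω t).2.2]; exact Or.inl hiT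
      · rw [(hω t).2.2]
        refine Or.inr ⟨hiT, ?_⟩
        have hxhat : xhat (t + 1) ω i = 0 := (hω t).1 i hiT
        have hle : (x (t + 1) ω i - xhat (t + 1) ω i - βhat (t + 1) ω i) ^ 2 ≤ B :=
          le_trans (Finset.single_le_sum
            (f := fun j => (x (t + 1) ω j - xhat (t + 1) ω j - βhat (t + 1) ω j) ^ 2)
            (fun j _ => sq_nonneg _) (Finset.mem_univ i)) (hω t).2.1
        rw [hxhat, sub_zero] at hle
        nlinarith
  -- inclusion of the detection event into the target event
  have hincl : ∀ t : ℕ,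
      {ω | ∀ i ∈ Nstar, ∃ s ≤ t, 4 * B < (x s ω i) ^ 2} ∩ Good
        ⊆ {ω | ∀ τ : ℕ, T (t + τ) ω = Nstar} := by
    intro t ω hω
    obtain ⟨hωG, hωGood⟩ := hω
    have hTt : T t ω = Nstar := by
      refine Set.Subset.antisymm (hTsub ω hωGood t) ?_
      intro i hi
      obtain ⟨s, hst, hbig⟩ := hωG i hi
      have h1 : i ∈ T s ω := hdet ω hωGood s i hi hbig
      have h2 := hTmono ω hωGood s (t - s) h1
      rwa [Nat.add_sub_cancel' hst] at h2
    intro τ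
    refine Set.Subset.antisymm (hTsub ω hωGood (t + τ)) ?_
    rw [← hTt]
    exact hTmono ω hωGood t τ
  -- measurability of the detection event
  have hGmeas : ∀ t : ℕ,
      MeasurableSet {ω | ∀ i ∈ Nstar, ∃ s ≤ t, 4 * B < (x s ω i) ^ 2} := by
    intro t
    have heq : {ω | ∀ i ∈ Nstar, ∃ s ≤ t, 4 * B < (x s ω i) ^ 2}
        = ⋂ i ∈ Nstar, ⋃ s ∈ Set.Iic t, {ω | 4 * B < (x s ω i) ^ 2} := by
      ext ω
      simp [Set.mem_iInter, Set.mem_iUnion]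
    rw [heq]
    refine MeasurableSet.biInter (Set.to_countable _) fun i hi => ?_
    refine MeasurableSet.biUnion (Set.to_countable _) fun s hs => ?_
    exact measurableSet_lt measurable_const ((hxmeas s i hi).pow_const 2)
  -- bound on the complement
  set F : Finset (Fin m) := (Set.toFinite Nstar).toFinset with hF
  have hcompl : ∀ t : ℕ, ta ≤ t →
      P {ω | ∀ i ∈ Nstar, ∃ s ≤ t, 4 * B < (x s ω i) ^ 2}ᶜ
        ≤ (F.card : ℝ≥0∞) * p ^ (t - ta) := by
    intro t hta
    have hsubc : {ω | ∀ i ∈ Nstar, ∃ s ≤ t, 4 * B < (x s ω i) ^ 2}ᶜ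
        ⊆ ⋃ i ∈ F, {ω | ∀ s ≤ t, (x s ω i) ^ 2 ≤ 4 * B} := by
      intro ω hω
      rw [Set.mem_compl_iff, Set.mem_setOf_eq] at hω
      push_neg at hω
      obtain ⟨i, hi, hbound⟩ := hω
      exact Set.mem_biUnion ((Set.Finite.mem_toFinset _).mpr hi) hbound
    calc P {ω | ∀ i ∈ Nstar, ∃ s ≤ t, 4 * B < (x s ω i) ^ 2}ᶜ
        ≤ ∑ i ∈ F, P {ω | ∀ s ≤ t, (x s ω i) ^ 2 ≤ 4 * B} :=
          (measure_mono hsubc).trans (measure_biUnion_finset_le F _)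
      _ ≤ ∑ _i ∈ F, p ^ (t - ta) := by
          refine Finset.sum_le_sum fun i hi => ?_
          have hiN : i ∈ Nstar := (Set.Finite.mem_toFinset _).mp hi
          refine (hkey t i hiN).trans ?_
          exact pow_le_pow_right_of_le_one' hplt.le
            (by have := hti i hiN; omega)
      _ = (F.card : ℝ≥0∞) * p ^ (t - ta) := by
          rw [Finset.sum_const, nsmul_eq_mul]
  -- convergence of the bound to 0
  have hpow : Tendsto (fun t : ℕ => (F.card : ℝ≥0∞) * p ^ (t - ta)) atTop (nhds 0) := by
    have h1 : Tendsto (fun n : ℕ => p ^ n) atTop (nhds 0) :=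
      ENNReal.tendsto_pow_atTop_nhds_zero_of_lt_one hplt
    have h2 := h1.comp (tendsto_sub_atTop_nat ta)
    have h3 := ENNReal.Tendsto.const_mul h2
      (Or.inr (by simp : (F.card : ℝ≥0∞) ≠ ⊤))
    simpa using h3
  have hGc : Tendsto
      (fun t : ℕ => P {ω | ∀ i ∈ Nstar, ∃ s ≤ t, 4 * B < (x s ω i) ^ 2}ᶜ)
      atTop (nhds 0) := by
    refine tendsto_of_tendsto_of_tendsto_of_le_of_le' tendsto_const_nhds hpow
      (Eventually.of_forall fun t => zero_le) ?_
    exact eventually_atTop.mpr ⟨ta, hcompl⟩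
  have hG : Tendsto
      (fun t : ℕ => P {ω | ∀ i ∈ Nstar, ∃ s ≤ t, 4 * B < (x s ω i) ^ 2})
      atTop (nhds 1) := by
    have heq : ∀ t : ℕ, P {ω | ∀ i ∈ Nstar, ∃ s ≤ t, 4 * B < (x s ω i) ^ 2}
        = 1 - P {ω | ∀ i ∈ Nstar, ∃ s ≤ t, 4 * B < (x s ω i) ^ 2}ᶜ := by
      intro t
      have h := prob_compl_eq_one_sub (μ := P) (hGmeas t).compl
      rwa [compl_compl] at h
    simp_rw [heq]
    have h := ENNReal.Tendsto.sub ((tendsto_const_nhds : Tendsto (fun _ : ℕ => (1 : ℝ≥0∞)) atTop (nhds 1)))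
      hGc (Or.inl ENNReal.one_ne_top)
    simpa using h
  -- final squeeze
  refine tendsto_of_tendsto_of_tendsto_of_le_of_le hG tendsto_const_nhds
    (fun t => ?_) (fun t => prob_le_one)
  calc P {ω | ∀ i ∈ Nstar, ∃ s ≤ t, 4 * B < (x s ω i) ^ 2}
      ≤ P (({ω | ∀ i ∈ Nstar, ∃ s ≤ t, 4 * B < (x s ω i) ^ 2} ∩ Good) ∪ Goodᶜ) := by
        refine measure_mono fun ω hω => ?_
        by_cases h : ω ∈ Good
        · exact Or.inl ⟨hω, h⟩
        · exact Or.inr h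
    _ ≤ P ({ω | ∀ i ∈ Nstar, ∃ s ≤ t, 4 * B < (x s ω i) ^ 2} ∩ Good) + P Goodᶜ :=
        measure_union_le _ _
    _ = P ({ω | ∀ i ∈ Nstar, ∃ s ≤ t, 4 * B < (x s ω i) ^ 2} ∩ Good) := by
        rw [hGoodae, add_zero]
    _ ≤ P {ω | ∀ τ : ℕ, T (t + τ) ω = Nstar} := measure_mono (hincl t)
end

section
/- Let A₁ be a real n×k matrix and A₂ a real n×j matrix. Suppose ‖A₁c‖₂² ≥ (1−δ)‖c‖₂² for all c ∈ ℝ^k with 0 ≤ δ < 1, and suppose ‖A₁ᵀA₂‖ ≤ θ, where ‖·‖ denotes the operator (spectral) norm. Then for every z ∈ ℝ^j, ‖(A₁ᵀA₁)^{−1}A₁ᵀA₂ z‖₂ ≤ (θ/(1−δ))·‖z‖₂. -/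
open Matrix

/-- **Interference (bias) term bound** (Theorem 1): if
`‖A₁c‖₂² ≥ (1−δ)‖c‖₂²` for all `c` (`0 ≤ δ < 1`) and the operator norm of
`A₁ᵀA₂` is at most `θ` (i.e. `‖A₁ᵀA₂ z‖₂ ≤ θ ‖z‖₂` for all `z`), then
`‖(A₁ᵀA₁)⁻¹A₁ᵀA₂ z‖₂ ≤ (θ/(1−δ)) ‖z‖₂` for every `z`. -/
theorem ls_bias_bound
    (n k j : ℕ) (A1 : Matrix (Fin n) (Fin k) ℝ) (A2 : Matrix (Fin n) (Fin j) ℝ)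
    (δ θ : ℝ) (hδ0 : 0 ≤ δ) (hδ1 : δ < 1)
    (h1 : ∀ c : Fin k → ℝ, (1 - δ) * ∑ i, (c i) ^ 2 ≤ ∑ r, (A1.mulVec c r) ^ 2)
    (hθ : ∀ z : Fin j → ℝ,
      Real.sqrt (∑ i, ((A1ᵀ * A2).mulVec z i) ^ 2) ≤ θ * Real.sqrt (∑ i, (z i) ^ 2)) :
    ∀ z : Fin j → ℝ,
      Real.sqrt (∑ i, (((A1ᵀ * A1)⁻¹ * (A1ᵀ * A2)).mulVec z i) ^ 2)
        ≤ (θ / (1 - δ)) * Real.sqrt (∑ i, (z i) ^ 2) := by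
  set G : Matrix (Fin k) (Fin k) ℝ := A1ᵀ * A1 with hG
  have hpos : 0 < 1 - δ := by linarith
  -- key quadratic form identity
  have hquad : ∀ v : Fin k → ℝ, v ⬝ᵥ G.mulVec v = ∑ r, (A1.mulVec v r) ^ 2 := by
    intro v
    rw [hG, ← Matrix.mulVec_mulVec, Matrix.dotProduct_mulVec, Matrix.vecMul_transpose]
    simp [dotProduct, sq]
  -- key norm lower bound: (1-δ) * ‖v‖ ≤ ‖G v‖
  have key : ∀ v : Fin k → ℝ,
      (1 - δ) * Real.sqrt (∑ i, (v i) ^ 2) ≤ Real.sqrt (∑ i, (G.mulVec v i) ^ 2) := by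
    intro v
    by_cases hv : ∑ i, (v i) ^ 2 = 0
    · rw [hv]; simp [Real.sqrt_nonneg]
    · have hvpos : 0 < ∑ i, (v i) ^ 2 := by
        rcases lt_or_eq_of_le (Finset.sum_nonneg fun i _ => sq_nonneg (v i)) with h | h
        · exact h
        · exact absurd h.symm hv
      have hcs : v ⬝ᵥ G.mulVec v ≤
          Real.sqrt (∑ i, (v i) ^ 2) * Real.sqrt (∑ i, (G.mulVec v i) ^ 2) := by
        have := Real.sum_mul_le_sqrt_mul_sqrt Finset.univ v (G.mulVec v)
        simpa [dotProduct] using this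
      have hlow : (1 - δ) * ∑ i, (v i) ^ 2 ≤ v ⬝ᵥ G.mulVec v := by
        rw [hquad v]; exact h1 v
      have hle : (1 - δ) * ∑ i, (v i) ^ 2 ≤
          Real.sqrt (∑ i, (v i) ^ 2) * Real.sqrt (∑ i, (G.mulVec v i) ^ 2) :=
        hlow.trans hcs
      have hs : Real.sqrt (∑ i, (v i) ^ 2) * Real.sqrt (∑ i, (v i) ^ 2)
          = ∑ i, (v i) ^ 2 := Real.mul_self_sqrt (le_of_lt hvpos)
      have hspos : 0 < Real.sqrt (∑ i, (v i) ^ 2) := Real.sqrt_pos.mpr hvpos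
      nlinarith [hspos, hs, hle, Real.sqrt_nonneg (∑ i, (G.mulVec v i) ^ 2)]
  -- invertibility of G
  have hker : ∀ v : Fin k → ℝ, G.mulVec v = 0 → v = 0 := by
    intro v hv
    have h0 : v ⬝ᵥ G.mulVec v = 0 := by rw [hv]; simp
    have := h1 v
    rw [← hquad v, h0] at this
    have hsum : ∑ i, (v i) ^ 2 ≤ 0 := by nlinarith
    have hz : ∑ i, (v i) ^ 2 = 0 :=
      le_antisymm hsum (Finset.sum_nonneg fun i _ => sq_nonneg (v i))
    funext i
    have := (Finset.sum_eq_zero_iff_of_nonneg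
      (fun i _ => sq_nonneg (v i))).mp hz i (Finset.mem_univ i)
    exact pow_eq_zero_iff (n := 2) (by norm_num) |>.mp this
  have hinj : Function.Injective G.mulVec := by
    intro a b hab
    have : G.mulVec (a - b) = 0 := by
      rw [Matrix.mulVec_sub, hab, sub_self]
    exact sub_eq_zero.mp (hker _ this)
  have hunit : IsUnit G := Matrix.mulVec_injective_iff_isUnit.mp hinj
  have hGinv : G * G⁻¹ = 1 := Matrix.mul_nonsing_inv G ((Matrix.isUnit_iff_isUnit_det G).mp hunit)
  -- finish
  intro z
  set w : Fin k → ℝ := (A1ᵀ * A2).mulVec z with hw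
  set u : Fin k → ℝ := (G⁻¹).mulVec w with hu
  have hGu : G.mulVec u = w := by
    rw [hu, Matrix.mulVec_mulVec, hGinv, Matrix.one_mulVec]
  have lhs_eq : ((A1ᵀ * A1)⁻¹ * (A1ᵀ * A2)).mulVec z = u := by
    rw [hu, hw, ← Matrix.mulVec_mulVec, hG]
  rw [lhs_eq]
  have h2 : (1 - δ) * Real.sqrt (∑ i, (u i) ^ 2) ≤ Real.sqrt (∑ i, (w i) ^ 2) := by
    have := key u; rwa [hGu] at this
  have h3 : Real.sqrt (∑ i, (w i) ^ 2) ≤ θ * Real.sqrt (∑ i, (z i) ^ 2) := hθ z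
  rw [div_mul_eq_mul_div, le_div_iff₀ hpos, mul_comm]
  linarith
end

section
/- Let A be a real n×m matrix, T and Δ disjoint subsets of {1,…,m} with A_TᵀA_T invertible, and suppose ‖A_T c‖₂² ≥ (1−δ)‖c‖₂² for all c (with 0 ≤ δ < 1) and ‖A_TᵀA_Δ‖ ≤ θ (operator norm). Let x be a random vector in ℝ^m with x_i = 0 a.s. for i ∉ T ∪ Δ, let w be a random vector in ℝⁿ independent of x with E[w] = 0 and E[w wᵀ] = σ² I_n, let y = A x + w, and define x̂ by (x̂)_T = (A_TᵀA_T)^{−1}A_Tᵀ y, zero off T, and β := x − x̂. Then max_{i ∈ T} E[β_i²] ≤ (θ²/(1−δ)²)·λ_max(E[(x)_Δ (x)_Δᵀ]) + σ²/(1−δ), where λ_max denotes the largest eigenvalue. In particular, if min_{i ∈ T ∪ Δ, x_i ≢ 0} E[x_i²] ≥ (θ²/(1−δ)²)·λ_max(E[(x)_Δ (x)_Δᵀ]) + σ²/(1−δ), then max_{i ∈ T} E[β_i²] ≤ min over the nonzero coordinates of E[x_i²], i.e., β is compressible along T. -/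
open Matrix MeasureTheory ProbabilityTheory

/-- The submatrix of `A` formed by the columns indexed by the set `T`. -/
def colSub {n m : ℕ} (A : Matrix (Fin n) (Fin m) ℝ) (T : Finset (Fin m)) :
    Matrix (Fin n) ↥T ℝ :=
  A.submatrix id ((↑) : ↥T → Fin m)

/-- The covariance-type matrix `E[(x)_Δ (x)_Δᵀ]` of the random vector `x`
restricted to the index set `Δ`. -/
noncomputable def covOn {Ω : Type*} [MeasurableSpace Ω] (P : Measure Ω)
    {m : ℕ} (Δ : Finset (Fin m)) (x : Ω → Fin m → ℝ) : Matrix ↥Δ ↥Δ ℝ :=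
  fun i j => ∫ ω, x ω i * x ω j ∂P

lemma quadForm_le_iSup_eigenvalues {ι : Type*} [Fintype ι] [DecidableEq ι]
    {S : Matrix ι ι ℝ} (hS : S.IsHermitian) (v : ι → ℝ) :
    v ⬝ᵥ S.mulVec v ≤ (⨆ j, hS.eigenvalues j) * ∑ i, (v i) ^ 2 := by
  rcases isEmpty_or_nonempty ι with h | h
  · simp [dotProduct]
  · set U : Matrix ι ι ℝ := (hS.eigenvectorUnitary : Matrix ι ι ℝ) with hU
    set u : ι → ℝ := (star U).mulVec v with hu
    have hUU : U * star U = 1 := (Matrix.mem_unitaryGroup_iff).mp hS.eigenvectorUnitary.2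
    have hvU : v ᵥ* U = u := by
      rw [hu, ← Matrix.mulVec_transpose, Matrix.star_eq_conjTranspose,
        Matrix.conjTranspose_eq_transpose_of_trivial]
    have hsplit : ∀ M : Matrix ι ι ℝ, ((U * M) *ᵥ v) = U *ᵥ (M *ᵥ v) := by
      intro M; rw [Matrix.mulVec_mulVec]
    have key : v ⬝ᵥ S.mulVec v = ∑ j, hS.eigenvalues j * (u j) ^ 2 := by
      conv_lhs => rw [hS.spectral_theorem, Unitary.conjStarAlgAut_apply, Matrix.mul_assoc, hsplit,
        ← Matrix.mulVec_mulVec]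
      rw [Matrix.dotProduct_mulVec, hvU, ← hu]
      simp only [dotProduct, Matrix.mulVec_diagonal, Function.comp,
        RCLike.ofReal_real_eq_id, id_eq]
      apply Finset.sum_congr rfl
      intro j _
      ring
    have key2 : ∑ i, (v i) ^ 2 = ∑ j, (u j) ^ 2 := by
      have h2 : v ⬝ᵥ v = v ⬝ᵥ (U * star U).mulVec v := by rw [hUU, Matrix.one_mulVec]
      rw [← Matrix.mulVec_mulVec, Matrix.dotProduct_mulVec, hvU, ← hu] at h2
      simpa [dotProduct, sq] using h2
    rw [key, key2, Finset.mul_sum]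
    apply Finset.sum_le_sum
    intro j _
    have h1 : hS.eigenvalues j ≤ ⨆ j, hS.eigenvalues j :=
      le_ciSup (Set.Finite.bddAbove (Set.finite_range _)) j
    nlinarith [sq_nonneg (u j)]

lemma dot_gram {κ ι : Type*} [Fintype κ] [Fintype ι] (A : Matrix κ ι ℝ) (u : ι → ℝ) :
    u ⬝ᵥ (Aᵀ * A).mulVec u = ∑ r, (A.mulVec u r) ^ 2 := by
  rw [← Matrix.mulVec_mulVec, Matrix.dotProduct_mulVec, Matrix.vecMul_transpose]
  simp [dotProduct, sq]

lemma inv_norm_bound {ι : Type*} [Fintype ι] [DecidableEq ι]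
    {G : Matrix ι ι ℝ} (hdet : IsUnit G.det) {a : ℝ} (ha : 0 < a)
    (hq : ∀ u : ι → ℝ, a * ∑ i, (u i) ^ 2 ≤ u ⬝ᵥ G.mulVec u) (v : ι → ℝ) :
    ∑ i, (G⁻¹.mulVec v i) ^ 2 ≤ (1 / a) ^ 2 * ∑ i, (v i) ^ 2 := by
  set u : ι → ℝ := G⁻¹.mulVec v with huu
  have hGu : G.mulVec u = v := by
    rw [huu, Matrix.mulVec_mulVec, Matrix.mul_nonsing_inv _ hdet, Matrix.one_mulVec]
  have h1 : a * ∑ i, (u i) ^ 2 ≤ u ⬝ᵥ v := by rw [← hGu]; exact hq u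
  have h2 : (u ⬝ᵥ v) ^ 2 ≤ (∑ i, (u i) ^ 2) * ∑ i, (v i) ^ 2 :=
    Finset.sum_mul_sq_le_sq_mul_sq Finset.univ u v
  have hu0 : (0:ℝ) ≤ ∑ i, (u i) ^ 2 := Finset.sum_nonneg fun i _ => sq_nonneg _
  have hv0 : (0:ℝ) ≤ ∑ i, (v i) ^ 2 := Finset.sum_nonneg fun i _ => sq_nonneg _
  rcases eq_or_lt_of_le hu0 with h | h
  · rw [← h]; positivity
  · have hd : (0:ℝ) < u ⬝ᵥ v := lt_of_lt_of_le (by positivity) h1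
    have hstep : (0:ℝ) ≤ (u ⬝ᵥ v - a * ∑ i, (u i) ^ 2) * (u ⬝ᵥ v + a * ∑ i, (u i) ^ 2) :=
      mul_nonneg (sub_nonneg.2 h1) (by positivity)
    have h3 : a ^ 2 * (∑ i, (u i) ^ 2) ^ 2 ≤ (u ⬝ᵥ v) ^ 2 := by nlinarith
    have h4 : a ^ 2 * (∑ i, (u i) ^ 2) ≤ ∑ i, (v i) ^ 2 := by nlinarith
    rw [div_pow, one_pow, one_div_mul_eq_div, le_div_iff₀ (by positivity)]
    nlinarith

lemma transpose_op_bound {ι κ : Type*} [Fintype ι] [Fintype κ]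
    {C : Matrix ι κ ℝ} {θ : ℝ}
    (hθ : ∀ z : κ → ℝ, Real.sqrt (∑ i, (C.mulVec z i) ^ 2)
        ≤ θ * Real.sqrt (∑ i, (z i) ^ 2)) (u : ι → ℝ) :
    ∑ j, (Cᵀ.mulVec u j) ^ 2 ≤ θ ^ 2 * ∑ i, (u i) ^ 2 := by
  set z : κ → ℝ := Cᵀ.mulVec u with hz
  have e1 : (C.mulVec z) ⬝ᵥ u = z ⬝ᵥ z := by
    rw [dotProduct_comm, Matrix.dotProduct_mulVec, ← Matrix.mulVec_transpose, ← hz]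
  have hzz : ∑ j, (z j) ^ 2 = (C.mulVec z) ⬝ᵥ u := by
    rw [e1]; simp [dotProduct, sq]
  have hcs : ((C.mulVec z) ⬝ᵥ u) ^ 2 ≤ (∑ i, (C.mulVec z i) ^ 2) * ∑ i, (u i) ^ 2 :=
    Finset.sum_mul_sq_le_sq_mul_sq Finset.univ _ u
  have hz0 : (0:ℝ) ≤ ∑ j, (z j) ^ 2 := Finset.sum_nonneg fun i _ => sq_nonneg _
  have hu0 : (0:ℝ) ≤ ∑ i, (u i) ^ 2 := Finset.sum_nonneg fun i _ => sq_nonneg _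
  have hb := hθ z
  have hCz0 : (0:ℝ) ≤ ∑ i, (C.mulVec z i) ^ 2 := Finset.sum_nonneg fun i _ => sq_nonneg _
  have h1 : ∑ i, (C.mulVec z i) ^ 2 ≤ θ ^ 2 * ∑ j, (z j) ^ 2 := by
    nlinarith [Real.sq_sqrt hCz0, Real.sq_sqrt hz0, Real.sqrt_nonneg (∑ i, (C.mulVec z i) ^ 2),
      Real.sqrt_nonneg (∑ j, (z j) ^ 2)]
  rcases eq_or_lt_of_le hz0 with h | h
  · rw [← h]; positivity
  · nlinarith [hcs, hzz, h1, h, hu0]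

/-- **Theorem 1, part 1 (compressibility of the LS error).**
With `A_T` satisfying `‖A_T c‖₂² ≥ (1−δ)‖c‖₂²` (`0 ≤ δ < 1`) and
`‖A_Tᵀ A_Δ‖ ≤ θ`, `x` a random vector supported (a.s.) on `T ∪ Δ`, `w` an
independent noise with `E[w] = 0`, `E[w wᵀ] = σ² I`, `y = Ax + w`, `x̂` the LS
estimate on `T` and `β = x − x̂`:
`max_{i ∈ T} E[β_i²] ≤ (θ²/(1−δ)²) λ_max(E[(x)_Δ(x)_Δᵀ]) + σ²/(1−δ)`.
In particular, if every not-identically-zero coordinate of `x` satisfies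
`E[x_i²] ≥ (θ²/(1−δ)²) λ_max(E[(x)_Δ(x)_Δᵀ]) + σ²/(1−δ)`, then
`max_{i ∈ T} E[β_i²] ≤ min` over those coordinates of `E[x_i²]`, i.e. `β` is
compressible along `T`. -/
theorem ls_error_compressible
    (n m : ℕ) (A : Matrix (Fin n) (Fin m) ℝ) (T Δ : Finset (Fin m))
    (hdisj : Disjoint T Δ) (δ θ σ : ℝ) (hδ0 : 0 ≤ δ) (hδ1 : δ < 1)
    (hinv : IsUnit ((colSub A T)ᵀ * colSub A T))
    (h1 : ∀ c : ↥T → ℝ,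
      (1 - δ) * ∑ i, (c i) ^ 2 ≤ ∑ r, ((colSub A T).mulVec c r) ^ 2)
    (hθ : ∀ z : ↥Δ → ℝ,
      Real.sqrt (∑ i, (((colSub A T)ᵀ * colSub A Δ).mulVec z i) ^ 2)
        ≤ θ * Real.sqrt (∑ i, (z i) ^ 2))
    {Ω : Type*} [MeasurableSpace Ω] (P : Measure Ω) [IsProbabilityMeasure P]
    (x : Ω → Fin m → ℝ) (w : Ω → Fin n → ℝ)
    (hxm : Measurable x) (hwm : Measurable w)
    (hxsupp : ∀ i : Fin m, i ∉ T → i ∉ Δ → ∀ᵐ ω ∂P, x ω i = 0)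
    (hindep : IndepFun x w P)
    (hx1 : ∀ i : Fin m, Integrable (fun ω => x ω i) P)
    (hx2 : ∀ i j : Fin m, Integrable (fun ω => x ω i * x ω j) P)
    (hw1 : ∀ r : Fin n, Integrable (fun ω => w ω r) P)
    (hw2 : ∀ r s : Fin n, Integrable (fun ω => w ω r * w ω s) P)
    (hwmean : ∀ r : Fin n, ∫ ω, w ω r ∂P = 0)
    (hwcov : ∀ r s : Fin n, ∫ ω, w ω r * w ω s ∂P = if r = s then σ ^ 2 else 0)
    (y : Ω → Fin n → ℝ) (hy : ∀ ω, y ω = A.mulVec (x ω) + w ω)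
    (xhat : Ω → Fin m → ℝ)
    (hxhatT : ∀ ω, ∀ i : ↥T, xhat ω i =
      (((colSub A T)ᵀ * colSub A T)⁻¹ * (colSub A T)ᵀ).mulVec (y ω) i)
    (hxhat0 : ∀ ω, ∀ i : Fin m, i ∉ T → xhat ω i = 0)
    (β : Ω → Fin m → ℝ) (hβ : ∀ ω, β ω = x ω - xhat ω)
    (hherm : (covOn P Δ x).IsHermitian) :
    (∀ i ∈ T, ∫ ω, (β ω i) ^ 2 ∂P ≤
      (θ ^ 2 / (1 - δ) ^ 2) * (⨆ j : ↥Δ, hherm.eigenvalues j) + σ ^ 2 / (1 - δ)) ∧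
    ((∀ i ∈ T ∪ Δ, ¬ (∀ᵐ ω ∂P, x ω i = 0) →
        (θ ^ 2 / (1 - δ) ^ 2) * (⨆ j : ↥Δ, hherm.eigenvalues j) + σ ^ 2 / (1 - δ)
          ≤ ∫ ω, (x ω i) ^ 2 ∂P) →
      ∀ i ∈ T, ∀ i' ∈ T ∪ Δ, ¬ (∀ᵐ ω ∂P, x ω i' = 0) →
        ∫ ω, (β ω i) ^ 2 ∂P ≤ ∫ ω, (x ω i') ^ 2 ∂P) := by
  have h1δ : (0:ℝ) < 1 - δ := by linarith
  set AT := colSub A T with hAT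
  set AD := colSub A Δ with hAD
  set G := ATᵀ * AT with hG
  have hdet : IsUnit G.det := (Matrix.isUnit_iff_isUnit_det _).mp hinv
  set Gi := G⁻¹ with hGi
  set M := Gi * ATᵀ with hM
  set C := ATᵀ * AD with hC
  set B := Gi * C with hB
  have hGsym : Gᵀ = G := by rw [hG, Matrix.transpose_mul, Matrix.transpose_transpose]
  have hGisym : Giᵀ = Gi := by
    rw [hGi, Matrix.transpose_nonsing_inv, hGsym]
  have hGisym' : ∀ a b : ↥T, Gi a b = Gi b a := by
    intro a b
    conv_lhs => rw [← hGisym]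
    rfl
  have hquad : ∀ u : ↥T → ℝ, (1 - δ) * ∑ i, (u i) ^ 2 ≤ u ⬝ᵥ G.mulVec u := by
    intro u; rw [hG, dot_gram]; exact h1 u
  have hGiG : Gi * G = 1 := by rw [hGi]; exact Matrix.nonsing_inv_mul _ hdet
  -- covariance quadratic form
  have hquadcov : ∀ z : ↥Δ → ℝ,
      ∫ ω, (∑ j : ↥Δ, z j * x ω ↑j) ^ 2 ∂P = z ⬝ᵥ (covOn P Δ x).mulVec z := by
    intro z
    have hrw : (fun ω => (∑ j : ↥Δ, z j * x ω ↑j) ^ 2)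
        = fun ω => ∑ j : ↥Δ, ∑ k : ↥Δ, (z j * z k) * (x ω ↑j * x ω ↑k) := by
      funext ω; rw [sq, Finset.sum_mul_sum]
      exact Finset.sum_congr rfl fun j _ => Finset.sum_congr rfl fun k _ => by ring
    have hint1 : ∀ j ∈ (Finset.univ : Finset ↥Δ),
        Integrable (fun ω => ∑ k : ↥Δ, (z j * z k) * (x ω ↑j * x ω ↑k)) P :=
      fun j _ => integrable_finset_sum _ fun k _ => (hx2 ↑j ↑k).const_mul _
    rw [hrw, integral_finset_sum _ hint1]
    have hj : ∀ j : ↥Δ, ∫ ω, ∑ k : ↥Δ, (z j * z k) * (x ω ↑j * x ω ↑k) ∂P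
        = ∑ k : ↥Δ, (z j * z k) * covOn P Δ x j k := by
      intro j
      have hint2 : ∀ k ∈ (Finset.univ : Finset ↥Δ),
          Integrable (fun ω => (z j * z k) * (x ω ↑j * x ω ↑k)) P :=
        fun k _ => (hx2 ↑j ↑k).const_mul _
      rw [integral_finset_sum _ hint2]
      exact Finset.sum_congr rfl fun k _ => integral_const_mul _ _
    rw [Finset.sum_congr rfl fun j _ => hj j]
    simp only [dotProduct, Matrix.mulVec, Finset.mul_sum]
    exact Finset.sum_congr rfl fun j _ => Finset.sum_congr rfl fun k _ => by ring
  -- nonnegativity of top eigenvalue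
  have hL0 : 0 ≤ ⨆ j : ↥Δ, hherm.eigenvalues j := by
    rcases isEmpty_or_nonempty ↥Δ with hE | hE
    · haveI := hE
      rw [Real.iSup_of_isEmpty]
    · have hpsd : (covOn P Δ x).PosSemidef := by
        refine .of_dotProduct_mulVec_nonneg hherm fun z => ?_
        have hz := hquadcov z
        have : (0:ℝ) ≤ ∫ ω, (∑ j : ↥Δ, z j * x ω ↑j) ^ 2 ∂P :=
          integral_nonneg fun ω => sq_nonneg _
        rw [hz] at this
        simpa using this
      obtain ⟨j⟩ := hE
      exact le_trans (hpsd.eigenvalues_nonneg j)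
        (le_ciSup (Set.Finite.bddAbove (Set.finite_range _)) j)
  -- main estimate
  have main : ∀ i ∈ T, ∫ ω, (β ω i) ^ 2 ∂P ≤
      (θ ^ 2 / (1 - δ) ^ 2) * (⨆ j : ↥Δ, hherm.eigenvalues j) + σ ^ 2 / (1 - δ) := by
    intro i hi
    set iT : ↥T := ⟨i, hi⟩ with hiT
    set v : ↥Δ → ℝ := fun j => B iT j with hv
    set c : Fin n → ℝ := fun r => M iT r with hcc
    -- a.e. support
    have hsupp' : ∀ᵐ ω ∂P, ∀ k, k ∉ T → k ∉ Δ → x ω k = 0 := by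
      rw [MeasureTheory.ae_all_iff]
      intro k
      by_cases hk1 : k ∈ T
      · exact Filter.Eventually.of_forall fun ω h' _ => absurd hk1 h'
      · by_cases hk2 : k ∈ Δ
        · exact Filter.Eventually.of_forall fun ω _ h' => absurd hk2 h'
        · filter_upwards [hxsupp k hk1 hk2] with ω h' _ _ using h'
    -- a.e. formula for β
    have hbeta : ∀ᵐ ω ∂P, β ω i
        = -(∑ j : ↥Δ, v j * x ω ↑j) - (∑ r, c r * w ω r) := by
      filter_upwards [hsupp'] with ω hω
      have hdecomp : A.mulVec (x ω)
          = AT.mulVec (fun k : ↥T => x ω ↑k) + AD.mulVec (fun j : ↥Δ => x ω ↑j) := by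
        funext r
        have h0 : ∀ k ∈ Finset.univ, k ∉ T ∪ Δ → A r k * x ω k = 0 := by
          intro k _ hk
          rw [Finset.mem_union] at hk
          push_neg at hk
          rw [hω k hk.1 hk.2, mul_zero]
        calc A.mulVec (x ω) r = ∑ k, A r k * x ω k := by
              simp [Matrix.mulVec, dotProduct]
        _ = ∑ k ∈ T ∪ Δ, A r k * x ω k :=
              (Finset.sum_subset (Finset.subset_univ _) h0).symm
        _ = ∑ k ∈ T, A r k * x ω k + ∑ k ∈ Δ, A r k * x ω k := Finset.sum_union hdisj
        _ = (AT.mulVec (fun k : ↥T => x ω ↑k) + AD.mulVec (fun j : ↥Δ => x ω ↑j)) r := by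
              rw [← Finset.sum_coe_sort T (fun k => A r k * x ω k),
                ← Finset.sum_coe_sort Δ (fun k => A r k * x ω k)]
              simp [hAT, hAD, colSub, Matrix.mulVec, dotProduct]
      have hMAT : M * AT = 1 := by
        rw [hM, Matrix.mul_assoc, ← hG, hGiG]
      have hMAD : M * AD = B := by
        rw [hM, Matrix.mul_assoc, ← hC, ← hB]
      have hxhat_i : xhat ω i
          = x ω i + B.mulVec (fun j : ↥Δ => x ω ↑j) iT + M.mulVec (w ω) iT := by
        have h' := hxhatT ω iT
        rw [h', hy ω, hdecomp, Matrix.mulVec_add, Matrix.mulVec_add,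
          Matrix.mulVec_mulVec, Matrix.mulVec_mulVec, hMAT, hMAD, Matrix.one_mulVec]
        rfl
      have hβi : β ω i = x ω i - xhat ω i := by rw [hβ ω]; rfl
      rw [hβi, hxhat_i]
      have hB' : B.mulVec (fun j : ↥Δ => x ω ↑j) iT = ∑ j : ↥Δ, v j * x ω ↑j := by
        simp [Matrix.mulVec, dotProduct, hv]
      have hM' : M.mulVec (w ω) iT = ∑ r, c r * w ω r := by
        simp [Matrix.mulVec, dotProduct, hcc]
      rw [hB', hM']
      ring
    -- integrability
    have hindxw : ∀ (j : Fin m) (r : Fin n),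
        IndepFun (fun ω => x ω j) (fun ω => w ω r) P :=
      fun j r => hindep.comp (measurable_pi_apply j) (measurable_pi_apply r)
    have hxw_int : ∀ (j : Fin m) (r : Fin n),
        Integrable (fun ω => x ω j * w ω r) P :=
      fun j r => (hindxw j r).integrable_mul (hx1 j) (hw1 r)
    have hxw0 : ∀ (j : Fin m) (r : Fin n), ∫ ω, x ω j * w ω r ∂P = 0 := by
      intro j r
      have h' := (hindxw j r).integral_mul_eq_mul_integral (hx1 j).1 (hw1 r).1
      rw [hwmean r, mul_zero] at h'
      exact h'
    have hS1rw : (fun ω => (∑ j : ↥Δ, v j * x ω ↑j) ^ 2)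
        = fun ω => ∑ j : ↥Δ, ∑ k : ↥Δ, (v j * v k) * (x ω ↑j * x ω ↑k) := by
      funext ω; rw [sq, Finset.sum_mul_sum]
      exact Finset.sum_congr rfl fun j _ => Finset.sum_congr rfl fun k _ => by ring
    have hS2rw : (fun ω => (∑ r, c r * w ω r) ^ 2)
        = fun ω => ∑ r, ∑ s, (c r * c s) * (w ω r * w ω s) := by
      funext ω; rw [sq, Finset.sum_mul_sum]
      exact Finset.sum_congr rfl fun j _ => Finset.sum_congr rfl fun k _ => by ring
    have hS12rw : (fun ω => (∑ j : ↥Δ, v j * x ω ↑j) * (∑ r, c r * w ω r))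
        = fun ω => ∑ j : ↥Δ, ∑ r, (v j * c r) * (x ω ↑j * w ω r) := by
      funext ω; rw [Finset.sum_mul_sum]
      exact Finset.sum_congr rfl fun j _ => Finset.sum_congr rfl fun k _ => by ring
    have hi1 : Integrable (fun ω => (∑ j : ↥Δ, v j * x ω ↑j) ^ 2) P := by
      rw [hS1rw]
      exact integrable_finset_sum _ fun j _ =>
        integrable_finset_sum _ fun k _ => (hx2 ↑j ↑k).const_mul _
    have hi2 : Integrable (fun ω => (∑ j : ↥Δ, v j * x ω ↑j) * (∑ r, c r * w ω r)) P := by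
      rw [hS12rw]
      exact integrable_finset_sum _ fun j _ =>
        integrable_finset_sum _ fun r _ => (hxw_int ↑j r).const_mul _
    have hi3 : Integrable (fun ω => (∑ r, c r * w ω r) ^ 2) P := by
      rw [hS2rw]
      exact integrable_finset_sum _ fun r _ =>
        integrable_finset_sum _ fun s _ => (hw2 r s).const_mul _
    -- split the integral
    have hae : (fun ω => (β ω i) ^ 2) =ᵐ[P]
        fun ω => (∑ j : ↥Δ, v j * x ω ↑j) ^ 2
          + 2 * ((∑ j : ↥Δ, v j * x ω ↑j) * (∑ r, c r * w ω r))
          + (∑ r, c r * w ω r) ^ 2 := by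
      filter_upwards [hbeta] with ω h'
      rw [h']; ring
    have hsplit : ∫ ω, (β ω i) ^ 2 ∂P
        = (∫ ω, (∑ j : ↥Δ, v j * x ω ↑j) ^ 2 ∂P)
          + 2 * (∫ ω, (∑ j : ↥Δ, v j * x ω ↑j) * (∑ r, c r * w ω r) ∂P)
          + ∫ ω, (∑ r, c r * w ω r) ^ 2 ∂P := by
      have hiA : Integrable (fun ω => (∑ j : ↥Δ, v j * x ω ↑j) ^ 2
          + 2 * ((∑ j : ↥Δ, v j * x ω ↑j) * (∑ r, c r * w ω r))) P :=
        hi1.add (hi2.const_mul 2)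
      have hiB : Integrable (fun ω =>
          2 * ((∑ j : ↥Δ, v j * x ω ↑j) * (∑ r, c r * w ω r))) P := hi2.const_mul 2
      rw [integral_congr_ae hae, integral_add hiA hi3,
        integral_add hi1 hiB, integral_const_mul]
    -- cross term is zero
    have e2 : ∫ ω, (∑ j : ↥Δ, v j * x ω ↑j) * (∑ r, c r * w ω r) ∂P = 0 := by
      have hint3 : ∀ j ∈ (Finset.univ : Finset ↥Δ),
          Integrable (fun ω => ∑ r, (v j * c r) * (x ω ↑j * w ω r)) P :=
        fun j _ => integrable_finset_sum _ fun r _ => (hxw_int ↑j r).const_mul _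
      rw [hS12rw, integral_finset_sum _ hint3]
      refine Finset.sum_eq_zero fun j _ => ?_
      have hint4 : ∀ r ∈ (Finset.univ : Finset (Fin n)),
          Integrable (fun ω => (v j * c r) * (x ω ↑j * w ω r)) P :=
        fun r _ => (hxw_int ↑j r).const_mul _
      rw [integral_finset_sum _ hint4]
      refine Finset.sum_eq_zero fun r _ => ?_
      rw [integral_const_mul, hxw0 ↑j r, mul_zero]
    -- noise term
    have e3 : ∫ ω, (∑ r, c r * w ω r) ^ 2 ∂P = σ ^ 2 * ∑ r, (c r) ^ 2 := by
      have hint5 : ∀ r ∈ (Finset.univ : Finset (Fin n)),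
          Integrable (fun ω => ∑ s, (c r * c s) * (w ω r * w ω s)) P :=
        fun r _ => integrable_finset_sum _ fun s _ => (hw2 r s).const_mul _
      rw [hS2rw, integral_finset_sum _ hint5]
      have hr : ∀ r, ∫ ω, ∑ s, (c r * c s) * (w ω r * w ω s) ∂P = (c r) ^ 2 * σ ^ 2 := by
        intro r
        have hint6 : ∀ s ∈ (Finset.univ : Finset (Fin n)),
            Integrable (fun ω => (c r * c s) * (w ω r * w ω s)) P :=
          fun s _ => (hw2 r s).const_mul _
        rw [integral_finset_sum _ hint6]
        rw [Finset.sum_congr rfl fun s _ => integral_const_mul (c r * c s) _]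
        rw [Finset.sum_congr rfl fun s _ => by rw [hwcov r s]]
        simp [mul_ite, Finset.sum_ite_eq, sq]
      rw [Finset.sum_congr rfl fun r _ => hr r, ← Finset.sum_mul]
      ring
    -- signal term
    have e1 : ∫ ω, (∑ j : ↥Δ, v j * x ω ↑j) ^ 2 ∂P = v ⬝ᵥ (covOn P Δ x).mulVec v :=
      hquadcov v
    -- deterministic bounds
    have hge : Gi.mulVec ((Pi.single iT 1 : ↥T → ℝ)) = fun k => Gi k iT := by
      funext k; simp [Matrix.mulVec_single]
    have hsum_e : ∑ k : ↥T, ((Pi.single iT 1 : ↥T → ℝ) k) ^ 2 = 1 := by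
      simp [Pi.single_apply, apply_ite (· ^ (2:ℕ))]
    have hgbound : ∑ k : ↥T, (Gi.mulVec ((Pi.single iT 1 : ↥T → ℝ)) k) ^ 2 ≤ (1 / (1 - δ)) ^ 2 := by
      have h' := inv_norm_bound hdet h1δ hquad ((Pi.single iT 1 : ↥T → ℝ))
      rw [← hGi] at h'
      rw [hsum_e, mul_one] at h'
      exact h'
    have hGdiag : Gi iT iT ≤ 1 / (1 - δ) := by
      have h6 : (Gi iT iT) ^ 2 ≤ ∑ k : ↥T, (Gi.mulVec ((Pi.single iT 1 : ↥T → ℝ)) k) ^ 2 := by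
        have h7 := Finset.single_le_sum
          (f := fun k => (Gi.mulVec ((Pi.single iT 1 : ↥T → ℝ)) k) ^ 2)
          (fun k _ => sq_nonneg _) (Finset.mem_univ iT)
        have h8 : (Gi.mulVec ((Pi.single iT 1 : ↥T → ℝ))) iT = Gi iT iT := by rw [hge]
        simpa [h8] using h7
      have hb0 : (0:ℝ) < 1 / (1 - δ) := by positivity
      nlinarith [le_trans h6 hgbound]
    have hc : ∑ r, (c r) ^ 2 = Gi iT iT := by
      have hMM : M * Mᵀ = Gi := by
        rw [hM, Matrix.transpose_mul, hGisym, Matrix.transpose_transpose,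
          ← Matrix.mul_assoc, Matrix.mul_assoc Gi ATᵀ AT, ← hG, hGiG, Matrix.one_mul]
      have : (M * Mᵀ) iT iT = ∑ r, (c r) ^ 2 := by
        simp [Matrix.mul_apply, hcc, sq]
      rw [← this, hMM]
    have hvCg : v = Cᵀ.mulVec (Gi.mulVec ((Pi.single iT 1 : ↥T → ℝ))) := by
      funext j
      rw [hge]
      simp only [hv, hB, Matrix.mul_apply, Matrix.mulVec, dotProduct,
        Matrix.transpose_apply]
      refine Finset.sum_congr rfl fun k _ => ?_
      rw [hGisym' iT k]
      ring
    have hvbound : ∑ j : ↥Δ, (v j) ^ 2 ≤ θ ^ 2 * (1 / (1 - δ)) ^ 2 := by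
      rw [hvCg]
      calc ∑ j : ↥Δ, (Cᵀ.mulVec (Gi.mulVec ((Pi.single iT 1 : ↥T → ℝ))) j) ^ 2
          ≤ θ ^ 2 * ∑ k : ↥T, (Gi.mulVec ((Pi.single iT 1 : ↥T → ℝ)) k) ^ 2 :=
            transpose_op_bound hθ _
        _ ≤ θ ^ 2 * (1 / (1 - δ)) ^ 2 :=
            mul_le_mul_of_nonneg_left hgbound (sq_nonneg θ)
    -- assemble
    have hlam := quadForm_le_iSup_eigenvalues hherm v
    set L := ⨆ j : ↥Δ, hherm.eigenvalues j with hL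
    calc ∫ ω, (β ω i) ^ 2 ∂P
        = v ⬝ᵥ (covOn P Δ x).mulVec v + σ ^ 2 * ∑ r, (c r) ^ 2 := by
          rw [hsplit, e1, e2, e3]; ring
      _ ≤ L * (θ ^ 2 * (1 / (1 - δ)) ^ 2) + σ ^ 2 * (1 / (1 - δ)) := by
          have t1 : v ⬝ᵥ (covOn P Δ x).mulVec v ≤ L * (θ ^ 2 * (1 / (1 - δ)) ^ 2) :=
            le_trans hlam (mul_le_mul_of_nonneg_left hvbound hL0)
          have t2 : σ ^ 2 * ∑ r, (c r) ^ 2 ≤ σ ^ 2 * (1 / (1 - δ)) := by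
            rw [hc]; exact mul_le_mul_of_nonneg_left hGdiag (sq_nonneg σ)
          exact add_le_add t1 t2
      _ = (θ ^ 2 / (1 - δ) ^ 2) * L + σ ^ 2 / (1 - δ) := by
          have e : (1 / (1 - δ)) ^ 2 = 1 / (1 - δ) ^ 2 := by rw [div_pow, one_pow]
          rw [e]
          ring
  exact ⟨main, fun hyp i hi i' hi' hnz => le_trans (main i hi) (hyp i' hi' hnz)⟩
end
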